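/- arXiv:2502.14583 — 2 statements merged into one kernel-verified Lean document; each statement's English description precedes it below -/
import Mathlib

section
/- Let $p$ and $p'$ be two functions on $[M]^D$ (conditioned on a fixed $y$) factorizing autoregressively as $p(x) = \prod_{d=1}^D P_d(x_d \mid x_{<d})$ and $p'(x) = \prod_{d=1}^D P'_d(x_d \mid x_{<d})$, where $p$ is a probability distribution, each $P'_d \ge P_d$ pointwise with $P'_d - P_d \le c\,P_d$ for $c = 4\epsilon e^{4\epsilon}$, and $\sum_{x_d} P'_d(x_d\mid x_{<d}) = e^{2\epsilon}$ for each prefix. Then $\sum_{x \in [M]^D} |p'(x) - p(x)| \le 2 e^{4\epsilon}(e^{2D\epsilon} - 1)$. Moreover, if $0 < \epsilon < 1/(4D)$, this is at most $8eD\epsilon$. -/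
open Finset

lemma update_funSplitAt {D M : ℕ} (κ : Fin D) (a m : Fin M) (y : {j // j ≠ κ} → Fin M) :
    Function.update ((Equiv.funSplitAt κ (Fin M)).symm (a, y)) κ m
      = (Equiv.funSplitAt κ (Fin M)).symm (m, y) := by
  funext j
  rcases eq_or_ne j κ with h | h
  · subst h; simp [Equiv.funSplitAt]
  · simp [Function.update_of_ne h, Equiv.funSplitAt, h]

lemma sum_update_reindex {D M : ℕ} (κ : Fin D) (h : (Fin D → Fin M) → ℝ) :
    ∑ x : Fin D → Fin M, ∑ m : Fin M, h (Function.update x κ m)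
      = M * ∑ x : Fin D → Fin M, h x := by
  rw [Finset.sum_comm]
  have key : ∀ m : Fin M, ∑ x : Fin D → Fin M, h (Function.update x κ m)
      = M * ∑ y : {j // j ≠ κ} → Fin M, h ((Equiv.funSplitAt κ (Fin M)).symm (m, y)) := by
    intro m
    rw [← (Equiv.funSplitAt κ (Fin M)).symm.sum_comp (fun x => h (Function.update x κ m))]
    rw [Fintype.sum_prod_type]
    simp only [update_funSplitAt]
    rw [Finset.sum_const, card_univ, Fintype.card_fin, nsmul_eq_mul]
  simp only [key, ← Finset.mul_sum]
  congr 1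
  rw [← (Equiv.funSplitAt κ (Fin M)).symm.sum_comp h, Fintype.sum_prod_type]

lemma sum_prod_autoregressive {D M : ℕ} (hM : 0 < M)
    (Q : Fin D → (Fin D → Fin M) → ℝ) (c : ℝ)
    (hdep : ∀ d (x x' : Fin D → Fin M), (∀ e : Fin D, e ≤ d → x e = x' e) → Q d x = Q d x')
    (hsum : ∀ (d : Fin D) (x : Fin D → Fin M),
      ∑ m : Fin M, Q d (Function.update x d m) = c) :
    ∑ x : Fin D → Fin M, ∏ d, Q d x = c ^ D := by
  have main : ∀ k : ℕ, k ≤ D →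
      ∑ x : Fin D → Fin M, ∏ d ∈ univ.filter (fun d : Fin D => (d : ℕ) < k), Q d x
        = c ^ k * (M : ℝ) ^ (D - k) := by
    intro k
    induction k with
    | zero =>
      intro _
      have h0 : (univ.filter (fun d : Fin D => (d : ℕ) < 0)) = ∅ := by
        ext d; simp
      simp [h0, Finset.sum_const, card_univ]
    | succ k ih =>
      intro hk
      have hkD : k < D := hk
      set κ : Fin D := ⟨k, hkD⟩ with hκ
      have hκval : (κ : ℕ) = k := rfl
      have hfilter : univ.filter (fun d : Fin D => (d : ℕ) < k + 1)
          = insert κ (univ.filter (fun d : Fin D => (d : ℕ) < k)) := by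
        ext d
        simp only [mem_filter, mem_univ, true_and, mem_insert, Fin.ext_iff, hκval]
        omega
      have hκnot : κ ∉ univ.filter (fun d : Fin D => (d : ℕ) < k) := by
        simp [hκval]
      have step : ∀ x : Fin D → Fin M,
          ∑ m : Fin M,
            Q κ (Function.update x κ m) *
              ∏ d ∈ univ.filter (fun d : Fin D => (d : ℕ) < k), Q d (Function.update x κ m)
          = c * ∏ d ∈ univ.filter (fun d : Fin D => (d : ℕ) < k), Q d x := by
        intro x
        have hprod : ∀ m : Fin M,
            ∏ d ∈ univ.filter (fun d : Fin D => (d : ℕ) < k), Q d (Function.update x κ m)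
            = ∏ d ∈ univ.filter (fun d : Fin D => (d : ℕ) < k), Q d x := by
          intro m
          refine Finset.prod_congr rfl fun d hd => ?_
          rcases Finset.mem_filter.1 hd with ⟨_, hdk⟩
          refine hdep d _ _ fun e he => ?_
          have hne : e ≠ κ := by
            intro heq
            have h1 : (e : ℕ) ≤ (d : ℕ) := he
            rw [heq, hκval] at h1
            omega
          exact Function.update_of_ne hne m x
        simp only [hprod, ← Finset.sum_mul, hsum κ x]
      have hMsum : (M : ℝ) *
          ∑ x : Fin D → Fin M,
            Q κ x * ∏ d ∈ univ.filter (fun d : Fin D => (d : ℕ) < k), Q d x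
          = c * (c ^ k * (M : ℝ) ^ (D - k)) := by
        rw [← sum_update_reindex κ
          (fun x => Q κ x * ∏ d ∈ univ.filter (fun d : Fin D => (d : ℕ) < k), Q d x)]
        simp only [step]
        rw [← Finset.mul_sum, ih (le_of_lt hkD)]
      rw [hfilter]
      rw [Finset.sum_congr rfl (fun x _ => Finset.prod_insert hκnot)]
      have hM' : (M : ℝ) ≠ 0 := Nat.cast_ne_zero.2 hM.ne'
      have hpow : (M : ℝ) ^ (D - k) = (M : ℝ) ^ (D - (k + 1)) * M := by
        rw [← pow_succ]
        congr 1
        omega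
      rw [hpow] at hMsum
      apply mul_left_cancel₀ hM'
      rw [hMsum]; ring
  have hD := main D le_rfl
  have huniv : univ.filter (fun d : Fin D => (d : ℕ) < D) = univ := by
    ext d; simp [d.isLt]
  rw [huniv] at hD
  simpa using hD

/-- Telescoping bound for upper brackets of autoregressive models on `[M]^D`.
`P d x` represents the conditional probability `P_d(x_d ∣ x_{<d})` (depending only on
`x_{≤ d}`), `p x = ∏_d P_d(x_d ∣ x_{<d})` is a probability distribution, and `P'`
satisfies `P ≤ P' ≤ (1 + 4ε e^{4ε}) P` with per-coordinate total mass `e^{2ε}`. Then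
`∑_x |p'(x) - p(x)| ≤ 2 e^{4ε}(e^{2Dε} - 1)`, which is at most `8 e D ε` when
`0 < ε < 1/(4D)`. -/
theorem autoregressive_upper_bracket_L1 (D M : ℕ) (hM : 0 < M) (ε : ℝ) (hε : 0 ≤ ε)
    (P P' : Fin D → (Fin D → Fin M) → ℝ)
    (hPdep : ∀ d (x x' : Fin D → Fin M), (∀ e : Fin D, e ≤ d → x e = x' e) → P d x = P d x')
    (hP'dep : ∀ d (x x' : Fin D → Fin M), (∀ e : Fin D, e ≤ d → x e = x' e) →
      P' d x = P' d x')
    (hPnonneg : ∀ d x, 0 ≤ P d x)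
    (hPsum : ∀ (d : Fin D) (x : Fin D → Fin M),
      ∑ m : Fin M, P d (Function.update x d m) = 1)
    (hdom : ∀ d x, P d x ≤ P' d x)
    (hratio : ∀ d x, P' d x - P d x ≤ 4 * ε * Real.exp (4 * ε) * P d x)
    (hP'sum : ∀ (d : Fin D) (x : Fin D → Fin M),
      ∑ m : Fin M, P' d (Function.update x d m) = Real.exp (2 * ε)) :
    (∑ x : Fin D → Fin M, |(∏ d, P' d x) - ∏ d, P d x| ≤
        2 * Real.exp (4 * ε) * (Real.exp (2 * D * ε) - 1)) ∧
      (0 < ε → ε < 1 / (4 * D) →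
        ∑ x : Fin D → Fin M, |(∏ d, P' d x) - ∏ d, P d x| ≤
          8 * Real.exp 1 * D * ε) := by
  have habs : ∀ x : Fin D → Fin M,
      |(∏ d, P' d x) - ∏ d, P d x| = (∏ d, P' d x) - ∏ d, P d x := by
    intro x
    refine abs_of_nonneg (sub_nonneg.2 ?_)
    exact Finset.prod_le_prod (fun d _ => hPnonneg d x) (fun d _ => hdom d x)
  have hsumP : ∑ x : Fin D → Fin M, ∏ d, P d x = 1 := by
    have := sum_prod_autoregressive hM P 1 hPdep hPsum
    simpa using this
  have hsumP' : ∑ x : Fin D → Fin M, ∏ d, P' d x = Real.exp (2 * D * ε) := by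
    have := sum_prod_autoregressive hM P' (Real.exp (2 * ε)) hP'dep hP'sum
    rw [this, ← Real.exp_nat_mul]
    ring_nf
  have hkey : ∑ x : Fin D → Fin M, |(∏ d, P' d x) - ∏ d, P d x|
      = Real.exp (2 * D * ε) - 1 := by
    simp only [habs]
    rw [Finset.sum_sub_distrib, hsumP, hsumP']
  constructor
  · rw [hkey]
    have h1 : (1 : ℝ) ≤ Real.exp (4 * ε) := Real.one_le_exp (by positivity)
    have h2 : (0 : ℝ) ≤ Real.exp (2 * D * ε) - 1 := by
      have : (1 : ℝ) ≤ Real.exp (2 * D * ε) := Real.one_le_exp (by positivity)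
      linarith
    nlinarith
  · intro hε0 hεD
    rw [hkey]
    have hD : 0 < D := by
      by_contra hD
      push_neg at hD
      interval_cases D
      simp at hεD
      linarith
    have hDpos : (0 : ℝ) < D := Nat.cast_pos.2 hD
    have hx : 2 * (D : ℝ) * ε < 1 / 2 := by
      rw [lt_div_iff₀ (by positivity)] at hεD
      nlinarith
    have hxnn : (0 : ℝ) ≤ 2 * D * ε := by positivity
    have hexp : Real.exp (2 * D * ε) ≤ 1 / (1 - 2 * D * ε) :=
      Real.exp_bound_div_one_sub_of_interval hxnn (by linarith)
    have hfrac : 1 / (1 - 2 * (D : ℝ) * ε) ≤ 1 + 4 * D * ε := by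
      rw [div_le_iff₀ (by linarith)]
      nlinarith
    have he1 : (1 : ℝ) ≤ Real.exp 1 := Real.one_le_exp zero_le_one
    nlinarith
end

section
/- Let $u, u': \mathscr{X} \to \mathbb{R}$ be measurable energy functions on a measurable space $\mathscr{X}$ of finite measure with $\sup_x |u(x) - u'(x)| \le \epsilon$, and suppose $\int e^{-u} < \infty$. Define the Gibbs density $p(x) = e^{-u(x)}/\int e^{-u(s)}ds$ and the inflated function $p'(x) = e^{-u'(x)+2\epsilon}/\int e^{-u'(s)}ds$. Then $p'(x) \ge p(x)$ for all $x$, and $\int |p'(x) - p(x)|\,dx \le 3\epsilon e^{4\epsilon} + \epsilon e^{\epsilon} \le 4\epsilon\, e^{\max(4\epsilon, 1)}$. -/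
open MeasureTheory

/-- Upper bracket for Gibbs (energy-based) densities: if `sup_x |u(x) - u'(x)| ≤ ε` and
`∫ e^{-u} < ∞` on a finite nonzero measure space, then the inflated function
`p'(x) = e^{-u'(x)+2ε} / ∫ e^{-u'}` pointwise dominates the Gibbs density
`p(x) = e^{-u(x)} / ∫ e^{-u}`, and `∫ |p' - p| ≤ 3ε e^{4ε} + ε e^{ε} ≤ 4ε e^{max(4ε,1)}`. -/
theorem ebm_upper_bracket {X : Type*} [MeasurableSpace X] (μ : Measure X)
    [IsFiniteMeasure μ] (hμ : μ ≠ 0) (u u' : X → ℝ)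
    (hu : Measurable u) (hu' : Measurable u')
    (ε : ℝ) (hε : 0 ≤ ε) (hclose : ∀ x, |u x - u' x| ≤ ε)
    (hint : Integrable (fun x => Real.exp (-u x)) μ) :
    (∀ x : X,
      Real.exp (-u x) / (∫ s, Real.exp (-u s) ∂μ) ≤
        Real.exp (-u' x + 2 * ε) / (∫ s, Real.exp (-u' s) ∂μ)) ∧
    (∫ x, |Real.exp (-u' x + 2 * ε) / (∫ s, Real.exp (-u' s) ∂μ) -
        Real.exp (-u x) / (∫ s, Real.exp (-u s) ∂μ)| ∂μ) ≤
      3 * ε * Real.exp (4 * ε) + ε * Real.exp ε ∧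
    3 * ε * Real.exp (4 * ε) + ε * Real.exp ε ≤ 4 * ε * Real.exp (max (4 * ε) 1) := by
  have hNZ : NeZero μ := ⟨hμ⟩
  set Z := ∫ s, Real.exp (-u s) ∂μ with hZ
  set Z' := ∫ s, Real.exp (-u' s) ∂μ with hZ'
  have hbound : ∀ x, Real.exp (-u' x) ≤ Real.exp ε * Real.exp (-u x) := by
    intro x
    rw [← Real.exp_add]
    apply Real.exp_le_exp.2
    have h := abs_le.1 (hclose x)
    linarith [h.1, h.2]
  have hbound2 : ∀ x, Real.exp (-u x) ≤ Real.exp (-u' x + ε) := by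
    intro x
    apply Real.exp_le_exp.2
    have h := abs_le.1 (hclose x)
    linarith [h.1, h.2]
  have hint' : Integrable (fun x => Real.exp (-u' x)) μ := by
    refine (hint.const_mul (Real.exp ε)).mono
      (hu'.neg.exp.aestronglyMeasurable) (ae_of_all _ fun x => ?_)
    rw [Real.norm_eq_abs, Real.norm_eq_abs, abs_of_pos (Real.exp_pos _),
      abs_of_pos (by positivity)]
    exact hbound x
  have hZpos : 0 < Z := integral_exp_pos (by simpa using hint)
  have hZ'pos : 0 < Z' := integral_exp_pos (by simpa using hint')
  have hZ'le : Z' ≤ Real.exp ε * Z := by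
    calc Z' ≤ ∫ x, Real.exp ε * Real.exp (-u x) ∂μ :=
          integral_mono hint' (hint.const_mul _) hbound
      _ = Real.exp ε * Z := integral_const_mul _ _
  have hpt : ∀ x : X, Real.exp (-u x) / Z ≤ Real.exp (-u' x + 2 * ε) / Z' := by
    intro x
    rw [div_le_div_iff₀ hZpos hZ'pos]
    have h1 := hbound2 x
    have h3 : Real.exp (-u' x + 2 * ε) = Real.exp (-u' x + ε) * Real.exp ε := by
      rw [← Real.exp_add]; ring_nf
    calc Real.exp (-u x) * Z' ≤ Real.exp (-u' x + ε) * (Real.exp ε * Z) := by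
          apply mul_le_mul h1 hZ'le hZ'pos.le (Real.exp_pos _).le
      _ = Real.exp (-u' x + 2 * ε) * Z := by rw [h3]; ring
  refine ⟨hpt, ?_, ?_⟩
  · have hfun : (fun x => Real.exp (-u' x + 2 * ε)) =
        fun x => Real.exp (-u' x) * Real.exp (2 * ε) := by
      funext x; rw [← Real.exp_add]
    have hPint : Integrable (fun x => Real.exp (-u' x + 2 * ε) / Z') μ := by
      simp only [Real.exp_add]; exact (hint'.mul_const _).div_const _
    have hQint : Integrable (fun x => Real.exp (-u x) / Z) μ := hint.div_const _
    have habs : (∫ x, |Real.exp (-u' x + 2 * ε) / Z' - Real.exp (-u x) / Z| ∂μ)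
        = ∫ x, (Real.exp (-u' x + 2 * ε) / Z' - Real.exp (-u x) / Z) ∂μ := by
      refine integral_congr_ae (ae_of_all _ fun x => ?_)
      exact abs_of_nonneg (sub_nonneg.2 (hpt x))
    have hIP : (∫ x, Real.exp (-u' x + 2 * ε) / Z' ∂μ) = Real.exp (2 * ε) := by
      simp only [Real.exp_add]
      rw [integral_div, integral_mul_const]
      field_simp
      exact hZ'.symm
    have hIQ : (∫ x, Real.exp (-u x) / Z ∂μ) = 1 := by
      rw [integral_div, div_self hZpos.ne']
    rw [habs, integral_sub hPint hQint, hIP, hIQ]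
    have key : Real.exp (2 * ε) - 1 ≤ 2 * ε * Real.exp (2 * ε) := by
      have h := Real.add_one_le_exp (-(2 * ε))
      rw [Real.exp_neg] at h
      nlinarith [Real.exp_pos (2 * ε), mul_inv_cancel₀ (Real.exp_pos (2 * ε)).ne']
    have h24 : Real.exp (2 * ε) ≤ Real.exp (4 * ε) := Real.exp_le_exp.2 (by linarith)
    nlinarith [Real.exp_pos ε, Real.exp_pos (4 * ε), mul_nonneg hε (Real.exp_pos ε).le]
  · have h4 : Real.exp (4 * ε) ≤ Real.exp (max (4 * ε) 1) :=
      Real.exp_le_exp.2 (le_max_left _ _)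
    have h1 : Real.exp ε ≤ Real.exp (max (4 * ε) 1) :=
      Real.exp_le_exp.2 (le_trans (by linarith) (le_max_left (4 * ε) 1))
    nlinarith [Real.exp_pos (max (4 * ε) 1)]
end
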